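/- Let E be a real normed vector space, p : E → ℝ differentiable at θ₀ with p(θ₀) > 0, let p_old > 0 be a constant, and set r(θ) = p(θ)/p_old. Let ε ∈ (0,1) and A ≤ 0 be real numbers with r(θ₀) ≠ 1−ε, and assume p is continuous in a neighborhood of θ₀. Then the PPO surrogate L(θ) = min( r(θ)·A, max(1−ε, min(r(θ), 1+ε))·A ) is differentiable at θ₀ and its Fréchet derivative equals (if r(θ₀) > 1−ε then A·r(θ₀) else 0) • D(log ∘ p)(θ₀). Equivalently, writing ω = max(r(θ₀), 1−ε), the derivative is ω·𝟙[ω ≠ 1−ε]·A·∇ log p(θ₀). -/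

import Mathlib

/-- Gradient of PPO's clipped surrogate, negative-advantage branch: if `A ≤ 0`,
`ε ∈ (0,1)` and the importance ratio `r(θ₀) = p(θ₀)/p_old` is not at the clipping boundary
`1−ε`, then the surrogate is differentiable at `θ₀` with Fréchet derivative
`(if r(θ₀) > 1−ε then A·r(θ₀) else 0) • D(log ∘ p)(θ₀)`;
in particular clipped samples contribute zero gradient. -/
theorem ppo_clipped_objective_gradient_neg
    {E : Type*} [NormedAddCommGroup E] [NormedSpace ℝ E]
    (p : E → ℝ) (θ₀ : E) (hdiff : DifferentiableAt ℝ p θ₀) (hppos : 0 < p θ₀)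
    (pold : ℝ) (hpold : 0 < pold)
    (ε A : ℝ) (hε : ε ∈ Set.Ioo (0 : ℝ) 1) (hA : A ≤ 0)
    (hne : p θ₀ / pold ≠ 1 - ε)
    (hcont : ∃ U ∈ nhds θ₀, ContinuousOn p U) :
    HasFDerivAt
      (fun θ => min (p θ / pold * A)
        (max (1 - ε) (min (p θ / pold) (1 + ε)) * A))
      ((if 1 - ε < p θ₀ / pold then A * (p θ₀ / pold) else 0) •
        fderiv ℝ (fun θ => Real.log (p θ)) θ₀)
      θ₀ := by
  obtain ⟨hε0, hε1⟩ := hε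
  have hf' := hdiff.hasFDerivAt
  have hlog : HasFDerivAt (fun θ => Real.log (p θ))
      ((p θ₀)⁻¹ • fderiv ℝ p θ₀) θ₀ := hf'.log hppos.ne'
  rw [hlog.fderiv]
  have hrcont : ContinuousAt (fun θ => p θ / pold) θ₀ :=
    (hdiff.continuousAt).div_const pold
  by_cases hgt : 1 - ε < p θ₀ / pold
  · -- unclipped branch: eventually equal to r·A
    simp only [if_pos hgt]
    have heq : (fun θ => min (p θ / pold * A)
        (max (1 - ε) (min (p θ / pold) (1 + ε)) * A)) =ᶠ[nhds θ₀]
        (fun θ => p θ / pold * A) := by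
      have hev : ∀ᶠ θ in nhds θ₀, 1 - ε < p θ / pold :=
        hrcont.eventually (eventually_gt_nhds hgt)
      filter_upwards [hev] with θ hθ
      have h1 : 1 - ε < min (p θ / pold) (1 + ε) := by
        apply lt_min hθ; linarith
      rw [max_eq_right h1.le]
      have h2 : min (p θ / pold) (1 + ε) ≤ p θ / pold := min_le_left _ _
      have h3 : p θ / pold * A ≤ min (p θ / pold) (1 + ε) * A :=
        mul_le_mul_of_nonpos_right h2 hA
      exact min_eq_left h3
    have hbase : HasFDerivAt (fun θ => p θ / pold * A)
        ((A / pold) • fderiv ℝ p θ₀) θ₀ := by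
      have : HasFDerivAt (fun θ => p θ * (A / pold))
          ((A / pold) • fderiv ℝ p θ₀) θ₀ := hf'.mul_const (A / pold)
      convert this using 2 with θ
      ring
    have : (A * (p θ₀ / pold)) • ((p θ₀)⁻¹ • fderiv ℝ p θ₀)
        = (A / pold) • fderiv ℝ p θ₀ := by
      rw [smul_smul]
      congr 1
      field_simp
    rw [this]
    exact hbase.congr_of_eventuallyEq heq
  · -- clipped branch: eventually constant
    simp only [if_neg hgt, zero_smul]
    have hlt : p θ₀ / pold < 1 - ε := lt_of_le_of_ne (not_lt.mp hgt) hne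
    have heq : (fun θ => min (p θ / pold * A)
        (max (1 - ε) (min (p θ / pold) (1 + ε)) * A)) =ᶠ[nhds θ₀]
        (fun _ => (1 - ε) * A) := by
      have hev : ∀ᶠ θ in nhds θ₀, p θ / pold < 1 - ε :=
        hrcont.eventually (eventually_lt_nhds hlt)
      filter_upwards [hev] with θ hθ
      have h1 : min (p θ / pold) (1 + ε) = p θ / pold := min_eq_left (by linarith)
      rw [h1, max_eq_left hθ.le]
      have h2 : (1 - ε) * A ≤ p θ / pold * A :=
        mul_le_mul_of_nonpos_right hθ.le hA
      exact min_eq_right h2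
    exact (hasFDerivAt_const ((1 - ε) * A) θ₀).congr_of_eventuallyEq heq
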